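/- Let d ≥ 0 be an integer, a_0, …, a_d integers, and χ = Σ_{i=0}^d a_i. Let s be a real number with s ≠ i for every integer i with 0 ≤ i ≤ d. Then, as q tends to 1 from the right, the quotient ( Π_{i=0}^d (1 − q^{i−s})^{a_i} ) / (q − 1)^χ tends to Π_{i=0}^d (s − i)^{a_i}, where all exponents are integer powers (zpow). In particular, the function q ↦ Π_{i=0}^d (1 − q^{i−s})^{a_i} has a zero of order exactly χ at q = 1, with leading coefficient Π_{i=0}^d (s − i)^{a_i}. -/

import Mathlib

open Filter Topology

lemma zpow_sum₀ {x : ℝ} (hx : x ≠ 0) (a : ℕ → ℤ) (s : Finset ℕ) :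
    x ^ (∑ i ∈ s, a i) = ∏ i ∈ s, x ^ (a i) := by
  classical
  induction s using Finset.induction with
  | empty => simp
  | @insert _ _ h ih =>
      rw [Finset.sum_insert h, Finset.prod_insert h, zpow_add₀ hx, ih]

lemma slope_lim (c : ℝ) :
    Tendsto (fun q : ℝ => (1 - Real.rpow q c) / (q - 1)) (𝓝[>] 1) (𝓝 (-c)) := by
  have h : HasDerivAt (fun x : ℝ => x ^ c) (c * (1 : ℝ) ^ (c - 1)) 1 :=
    Real.hasDerivAt_rpow_const (Or.inl one_ne_zero)
  rw [Real.one_rpow, mul_one] at h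
  have h2 := (hasDerivAt_iff_tendsto_slope.mp h).mono_left
    (nhdsWithin_mono _ (fun x hx => ne_of_gt hx))
  refine h2.neg.congr (fun q => ?_)
  simp [slope_def_field, Real.one_rpow, ← neg_div, neg_sub]

theorem stmt_4 (d : ℕ) (a : ℕ → ℤ) (s : ℝ) (hs : ∀ i : ℕ, i ≤ d → s ≠ (i : ℝ)) :
    Filter.Tendsto (fun q : ℝ =>
      (∏ i ∈ Finset.range (d + 1), (1 - Real.rpow q ((i : ℝ) - s)) ^ (a i)) /
        (q - 1) ^ (∑ i ∈ Finset.range (d + 1), a i))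
      (nhdsWithin 1 (Set.Ioi 1))
      (nhds (∏ i ∈ Finset.range (d + 1), (s - (i : ℝ)) ^ (a i))) := by
  have key : Tendsto (fun q : ℝ =>
      ∏ i ∈ Finset.range (d + 1), ((1 - Real.rpow q ((i : ℝ) - s)) / (q - 1)) ^ (a i))
      (𝓝[>] 1) (𝓝 (∏ i ∈ Finset.range (d + 1), (s - (i : ℝ)) ^ (a i))) := by
    apply tendsto_finset_prod
    intro i hi
    have hne : s - (i : ℝ) ≠ 0 := sub_ne_zero.mpr (hs i (Nat.lt_succ_iff.mp (Finset.mem_range.mp hi)))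
    have := (slope_lim ((i : ℝ) - s)).zpow₀ (a i) (Or.inl (by rwa [neg_sub]))
    rwa [neg_sub] at this
  refine key.congr' ?_
  filter_upwards [self_mem_nhdsWithin] with q hq
  have hq1 : q - 1 ≠ 0 := sub_ne_zero.mpr (ne_of_gt hq)
  rw [zpow_sum₀ hq1, ← Finset.prod_div_distrib]
  simp_rw [div_zpow]
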